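/- arXiv:2604.21423 — 2 statements merged into one kernel-verified Lean document; each statement's English description precedes it below -/
import Mathlib

section
/- In the setting of mixed-logit demand with log-normal mixing, η_{jj}(λ p)² / m(λ p_j)² → 1 as λ → ∞ along any ray p ∈ ℝ_{++}^J, where η_{jj}(p) = ∂_{p_j} q_j(p)/q_j(p) and m(x) = −L'(x)/L(x) with L the log-normal Laplace transform. -/
open MeasureTheory Real Filter

/-- Density of the log-normal distribution with parameters `μ` and `σ` on `(0, ∞)`. -/
noncomputable def lognormalPdf (μ σ : ℝ) (α : ℝ) : ℝ :=
  (1 / (α * σ * Real.sqrt (2 * Real.pi))) * Real.exp (-(Real.log α - μ) ^ 2 / (2 * σ ^ 2))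

/-- Laplace transform of the log-normal distribution. -/
noncomputable def lnLaplace (μ σ : ℝ) (x : ℝ) : ℝ :=
  ∫ α in Set.Ioi (0 : ℝ), Real.exp (-α * x) * lognormalPdf μ σ α

/-- Logit choice probability of product `j` at prices `p`, mean utilities `δ`,
and price coefficient `α`. -/
noncomputable def logitShare {J : ℕ} (δ : Fin J → ℝ) (j : Fin J) (p : Fin J → ℝ) (α : ℝ) : ℝ :=
  Real.exp (δ j - α * p j) / (1 + ∑ l, Real.exp (δ l - α * p l))

/-- Mixed-logit demand for product `j` with log-normal mixing over the price coefficient. -/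
noncomputable def qLN {J : ℕ} (δ : Fin J → ℝ) (M μ σ : ℝ) (j : Fin J) (p : Fin J → ℝ) : ℝ :=
  M * ∫ α in Set.Ioi (0 : ℝ), logitShare δ j p α * lognormalPdf μ σ α

/-- Partial derivative of `F : (Fin J → ℝ) → ℝ` in the `k`-th coordinate at `p`. -/
noncomputable def pd {J : ℕ} (F : (Fin J → ℝ) → ℝ) (k : Fin J) (p : Fin J → ℝ) : ℝ :=
  deriv (fun t => F (Function.update p k t)) (p k)



open Set

section basics
variable {μ σ : ℝ}

lemma measurable_lognormalPdf : Measurable (lognormalPdf μ σ) := by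
  unfold lognormalPdf; measurability

lemma lognormalPdf_pos (hσ : 0 < σ) {α : ℝ} (hα : 0 < α) : 0 < lognormalPdf μ σ α := by
  unfold lognormalPdf
  have h2 : (0:ℝ) < Real.sqrt (2 * Real.pi) := Real.sqrt_pos.2 (by positivity)
  positivity

lemma quad_bound (hσ : 0 < σ) (a u : ℝ) :
    a * u - (u - μ) ^ 2 / (2 * σ ^ 2) ≤ a * μ + a ^ 2 * σ ^ 2 / 2 := by
  have hσ2 : (0:ℝ) < 2 * σ ^ 2 := by positivity
  have key : a * u - (u - μ) ^ 2 / (2 * σ ^ 2) - (a * μ + a ^ 2 * σ ^ 2 / 2)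
      = -((u - (μ + a * σ ^ 2)) ^ 2) / (2 * σ ^ 2) := by
    field_simp; ring
  have h2 : -((u - (μ + a * σ ^ 2)) ^ 2) / (2 * σ ^ 2) ≤ 0 :=
    div_nonpos_of_nonpos_of_nonneg (neg_nonpos.2 (sq_nonneg _)) hσ2.le
  linarith

lemma lognormalPdf_le_rpow (hσ : 0 < σ) (a : ℝ) {α : ℝ} (hα : 0 < α) :
    lognormalPdf μ σ α ≤
      (σ * Real.sqrt (2 * Real.pi))⁻¹ *
        Real.exp ((-1 - a) * μ + (-1 - a) ^ 2 * σ ^ 2 / 2) * α ^ a := by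
  have h2 : (0:ℝ) < Real.sqrt (2 * Real.pi) := Real.sqrt_pos.2 (by positivity)
  have hu : Real.exp (Real.log α) = α := Real.exp_log hα
  have h1 : lognormalPdf μ σ α
      = (σ * Real.sqrt (2 * Real.pi))⁻¹ *
        Real.exp (-(Real.log α) + -(Real.log α - μ) ^ 2 / (2 * σ ^ 2)) := by
    unfold lognormalPdf
    rw [Real.exp_add, Real.exp_neg, hu]
    field_simp
  have ha : α ^ a = Real.exp (a * Real.log α) := by
    rw [Real.rpow_def_of_pos hα, mul_comm]
  rw [h1, ha, mul_assoc, ← Real.exp_add]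
  have hq := quad_bound (μ := μ) hσ (-1 - a) (Real.log α)
  have hinv : (0:ℝ) ≤ (σ * Real.sqrt (2 * Real.pi))⁻¹ := by positivity
  exact mul_le_mul_of_nonneg_left (Real.exp_le_exp.2 (by rw [neg_div]; linarith)) hinv

end basics

section integr
variable {μ σ : ℝ}

lemma moment_rpow_bound (hσ : 0 < σ) (k : ℕ) (b : ℝ) :
    ∃ C : ℝ, 0 ≤ C ∧ ∀ α : ℝ, 0 < α → α ^ k * lognormalPdf μ σ α ≤ C * α ^ b := by
  set a : ℝ := b - k with ha
  refine ⟨(σ * Real.sqrt (2 * Real.pi))⁻¹ *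
      Real.exp ((-1 - a) * μ + (-1 - a) ^ 2 * σ ^ 2 / 2), by positivity, fun α hα => ?_⟩
  have h1 := lognormalPdf_le_rpow (μ := μ) hσ a hα
  calc α ^ k * lognormalPdf μ σ α
      ≤ α ^ k * ((σ * Real.sqrt (2 * Real.pi))⁻¹ *
          Real.exp ((-1 - a) * μ + (-1 - a) ^ 2 * σ ^ 2 / 2) * α ^ a) :=
        mul_le_mul_of_nonneg_left h1 (by positivity)
    _ = (σ * Real.sqrt (2 * Real.pi))⁻¹ *
          Real.exp ((-1 - a) * μ + (-1 - a) ^ 2 * σ ^ 2 / 2) * (α ^ (k:ℝ) * α ^ a) := by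
        rw [Real.rpow_natCast]; ring
    _ = _ := by rw [← Real.rpow_add hα, show (k:ℝ) + a = b by rw [ha]; ring]

lemma measurable_moment (μ σ : ℝ) (k : ℕ) :
    Measurable fun α : ℝ => α ^ k * lognormalPdf μ σ α :=
  (measurable_id.pow_const k).mul measurable_lognormalPdf

lemma integrableOn_moment (hσ : 0 < σ) (k : ℕ) :
    IntegrableOn (fun α => α ^ k * lognormalPdf μ σ α) (Set.Ioi (0:ℝ)) := by
  have hmeas := measurable_moment μ σ k
  have h1 : IntegrableOn (fun α => α ^ k * lognormalPdf μ σ α) (Set.Ioo (0:ℝ) 1) := by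
    obtain ⟨C, hC0, hC⟩ := moment_rpow_bound (μ := μ) hσ k (-(1/2))
    have hint : IntegrableOn (fun α : ℝ => C * α ^ (-(1/2) : ℝ)) (Set.Ioo (0:ℝ) 1) :=
      ((intervalIntegral.integrableOn_Ioo_rpow_iff one_pos).2 (by norm_num)).const_mul C
    refine hint.mono' hmeas.aestronglyMeasurable ?_
    filter_upwards [ae_restrict_mem measurableSet_Ioo] with α hα
    rw [Real.norm_eq_abs, abs_of_nonneg
      (mul_nonneg (pow_nonneg hα.1.le k) (lognormalPdf_pos hσ hα.1).le)]
    exact hC α hα.1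
  have h2 : IntegrableOn (fun α => α ^ k * lognormalPdf μ σ α) (Set.Ici (1:ℝ)) := by
    rw [integrableOn_Ici_iff_integrableOn_Ioi]
    obtain ⟨C, hC0, hC⟩ := moment_rpow_bound (μ := μ) hσ k (-2)
    have hint : IntegrableOn (fun α : ℝ => C * α ^ (-2 : ℝ)) (Set.Ioi (1:ℝ)) :=
      (integrableOn_Ioi_rpow_of_lt (by norm_num) one_pos).const_mul C
    refine hint.mono' hmeas.aestronglyMeasurable ?_
    filter_upwards [ae_restrict_mem measurableSet_Ioi] with α hα
    have hα0 : (0:ℝ) < α := lt_trans one_pos hα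
    rw [Real.norm_eq_abs, abs_of_nonneg
      (mul_nonneg (pow_nonneg hα0.le k) (lognormalPdf_pos hσ hα0).le)]
    exact hC α hα0
  have h3 := h1.union h2
  rwa [Set.Ioo_union_Ici_eq_Ioi one_pos] at h3

/-- Integrability of `α^k e^{-αx} pdf` on any measurable subset of `(0,∞)` for `x ≥ 0`. -/
lemma integrableOn_mik (hσ : 0 < σ) (k : ℕ) {x : ℝ} (hx : 0 ≤ x) :
    IntegrableOn (fun α => α ^ k * Real.exp (-α * x) * lognormalPdf μ σ α)
      (Set.Ioi (0:ℝ)) := by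
  refine (integrableOn_moment (μ := μ) hσ k).mono' ?_ ?_
  · exact (((measurable_id.pow_const k).mul (by measurability)).mul
      measurable_lognormalPdf).aestronglyMeasurable
  · filter_upwards [ae_restrict_mem measurableSet_Ioi] with α hα
    have h1 : Real.exp (-α * x) ≤ 1 := Real.exp_le_one_iff.2 (by
      have : (0:ℝ) ≤ α * x := mul_nonneg (le_of_lt hα) hx
      linarith)
    have hpdf := (lognormalPdf_pos (μ := μ) hσ hα).le
    have hαk : (0:ℝ) ≤ α ^ k := pow_nonneg (le_of_lt hα) k
    have hexp : (0:ℝ) ≤ Real.exp (-α * x) := (Real.exp_pos _).le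
    rw [Real.norm_eq_abs, abs_of_nonneg (mul_nonneg (mul_nonneg hαk hexp) hpdf)]
    calc α ^ k * Real.exp (-α * x) * lognormalPdf μ σ α
        ≤ α ^ k * 1 * lognormalPdf μ σ α := by
          apply mul_le_mul_of_nonneg_right _ hpdf
          exact mul_le_mul_of_nonneg_left h1 hαk
      _ = α ^ k * lognormalPdf μ σ α := by ring

end integr

/-- `k`-th moment-weighted Laplace transform of the log-normal density. -/
noncomputable def mik (μ σ : ℝ) (k : ℕ) (x : ℝ) : ℝ :=
  ∫ α in Set.Ioi (0:ℝ), α ^ k * Real.exp (-α * x) * lognormalPdf μ σ α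

section mikl
variable {μ σ : ℝ}

lemma mik_integrand_nonneg (hσ : 0 < σ) (k : ℕ) (x : ℝ) :
    0 ≤ᵐ[volume.restrict (Set.Ioi (0:ℝ))]
      fun α => α ^ k * Real.exp (-α * x) * lognormalPdf μ σ α := by
  filter_upwards [ae_restrict_mem measurableSet_Ioi] with α hα
  have := (lognormalPdf_pos (μ := μ) hσ hα).le
  have hk : (0:ℝ) ≤ α ^ k := pow_nonneg (le_of_lt hα) k
  positivity

lemma mik_pos (hσ : 0 < σ) (k : ℕ) {x : ℝ} (hx : 0 ≤ x) : 0 < mik μ σ k x := by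
  rw [mik, setIntegral_pos_iff_support_of_nonneg_ae (mik_integrand_nonneg hσ k x)
    (integrableOn_mik hσ k hx)]
  have hsub : Set.Ioi (0:ℝ) ⊆ Function.support
      (fun α => α ^ k * Real.exp (-α * x) * lognormalPdf μ σ α) ∩ Set.Ioi 0 := by
    intro α hα
    refine ⟨?_, hα⟩
    have h1 := lognormalPdf_pos (μ := μ) hσ hα
    have h2 : (0:ℝ) < α ^ k := pow_pos hα k
    have h3 := Real.exp_pos (-α * x)
    exact ne_of_gt (by positivity)
  calc (0:ENNReal) < volume (Set.Ioi (0:ℝ)) := by simp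
    _ ≤ _ := measure_mono hsub

lemma mik_nonneg (hσ : 0 < σ) (k : ℕ) (x : ℝ) : 0 ≤ mik μ σ k x :=
  integral_nonneg_of_ae (mik_integrand_nonneg hσ k x)

/-- Sub-exponential lower bound on `mik`. -/
lemma mik_lb (hσ : 0 < σ) (k : ℕ) {ε : ℝ} (hε : 0 < ε) :
    ∃ c : ℝ, 0 < c ∧ ∀ x : ℝ, 0 ≤ x → c * Real.exp (-ε * x) ≤ mik μ σ k x := by
  set s : Set ℝ := Set.Ioc (ε/2) ε with hs
  have hsub : s ⊆ Set.Ioi (0:ℝ) := fun α hα => lt_trans (by linarith) hα.1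
  set c0 : ℝ := ∫ α in s, lognormalPdf μ σ α with hc0
  have hpdfint : IntegrableOn (lognormalPdf μ σ) s := by
    have := (integrableOn_moment (μ := μ) hσ 0).mono_set hsub
    simpa using this
  have hc0pos : 0 < c0 := by
    rw [hc0, setIntegral_pos_iff_support_of_nonneg_ae ?pos hpdfint]
    case pos =>
      filter_upwards [ae_restrict_mem measurableSet_Ioc] with α hα
      exact (lognormalPdf_pos (μ := μ) hσ (hsub hα)).le
    refine lt_of_lt_of_le (b := volume s) ?_ (measure_mono (fun α hα => ?_))
    · rw [hs, Real.volume_Ioc]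
      simp only [ENNReal.ofReal_pos]
      linarith
    · exact ⟨ne_of_gt (lognormalPdf_pos (μ := μ) hσ (hsub hα)), hα⟩
  set m : ℝ := min ((ε/2) ^ k) 1 with hm
  have hmpos : 0 < m := lt_min (pow_pos (by linarith) k) one_pos
  refine ⟨m * c0, by positivity, fun x hx => ?_⟩
  have key : ∀ α ∈ s, m * Real.exp (-ε * x) * lognormalPdf μ σ α
      ≤ α ^ k * Real.exp (-α * x) * lognormalPdf μ σ α := by
    intro α hα
    have hα0 : (0:ℝ) < α := hsub hα
    have hpdf := (lognormalPdf_pos (μ := μ) hσ hα0).le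
    apply mul_le_mul_of_nonneg_right _ hpdf
    have h1 : Real.exp (-ε * x) ≤ Real.exp (-α * x) :=
      Real.exp_le_exp.2 (by nlinarith [hα.2])
    have h2 : m ≤ α ^ k := by
      rcases Nat.eq_zero_or_pos k with hk | hk
      · subst hk; simpa [hm] using min_le_right _ _
      · refine le_trans (min_le_left _ _) ?_
        exact pow_le_pow_left₀ (by linarith) (le_of_lt hα.1) k
    exact mul_le_mul h2 h1 (Real.exp_pos _).le (pow_nonneg hα0.le k)
  calc m * c0 * Real.exp (-ε * x)
      = ∫ α in s, m * Real.exp (-ε * x) * lognormalPdf μ σ α := by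
        rw [integral_const_mul]; ring
    _ ≤ ∫ α in s, α ^ k * Real.exp (-α * x) * lognormalPdf μ σ α :=
        setIntegral_mono_on (hpdfint.const_mul _)
          ((integrableOn_mik (μ := μ) hσ k hx).mono_set hsub) measurableSet_Ioc key
    _ ≤ mik μ σ k x := by
        rw [mik]
        apply setIntegral_mono_set (integrableOn_mik hσ k hx)
          (mik_integrand_nonneg hσ k x) (HasSubset.Subset.eventuallyLE hsub)

end mikl

section shift
variable {μ σ : ℝ}

lemma pdf_shift_le (hσ : 0 < σ) {t : ℝ} (ht : 0 < t) {ε : ℝ} (hε : 0 < ε) :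
    ∃ δ₀ : ℝ, 0 < δ₀ ∧ ∀ β : ℝ, 0 < β → β ≤ δ₀ →
      lognormalPdf (μ + t) σ β ≤ ε * lognormalPdf μ σ β := by
  refine ⟨Real.exp (μ + t/2 + σ^2/t * Real.log ε), Real.exp_pos _, fun β hβ hβδ => ?_⟩
  have hu : Real.log β ≤ μ + t/2 + σ^2/t * Real.log ε := by
    have h := Real.log_le_log hβ hβδ
    rwa [Real.log_exp] at h
  set u := Real.log β with hudef
  have hσ2 : (0:ℝ) < σ^2 := by positivity
  have hdiv : t * (σ^2/t * Real.log ε) = σ^2 * Real.log ε := by field_simp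
  have hineq : (u-μ)^2 - (u-(μ+t))^2 ≤ 2*σ^2*Real.log ε := by
    have h2 : 2*t*(u-μ) ≤ 2*t*(t/2 + σ^2/t*Real.log ε) := by
      apply mul_le_mul_of_nonneg_left _ (by linarith)
      linarith
    nlinarith [h2, hdiv]
  have hexp : Real.exp (-(u - (μ+t))^2/(2*σ^2))
      ≤ Real.exp (Real.log ε + -(u-μ)^2/(2*σ^2)) := by
    apply Real.exp_le_exp.2
    have e1 : Real.log ε + -(u-μ)^2/(2*σ^2) - (-(u-(μ+t))^2/(2*σ^2))
        = (2*σ^2*Real.log ε - ((u-μ)^2 - (u-(μ+t))^2))/(2*σ^2) := by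
      field_simp; ring
    have e2 : (0:ℝ) ≤ (2*σ^2*Real.log ε - ((u-μ)^2 - (u-(μ+t))^2))/(2*σ^2) :=
      div_nonneg (by linarith) (by positivity)
    linarith
  unfold lognormalPdf
  rw [Real.exp_add, Real.exp_log hε] at hexp
  have hpos : (0:ℝ) ≤ 1/(β * σ * Real.sqrt (2*Real.pi)) := by positivity
  calc (1 / (β * σ * Real.sqrt (2 * Real.pi))) * Real.exp (-(Real.log β - (μ+t))^2/(2*σ^2))
      ≤ (1 / (β * σ * Real.sqrt (2 * Real.pi))) *
        (ε * Real.exp (-(Real.log β - μ)^2/(2*σ^2))) :=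
        mul_le_mul_of_nonneg_left hexp hpos
    _ = ε * ((1 / (β * σ * Real.sqrt (2 * Real.pi))) *
        Real.exp (-(Real.log β - μ)^2/(2*σ^2))) := by ring

lemma mik_shift_tendsto (hσ : 0 < σ) (k : ℕ) {t : ℝ} (ht : 0 < t) :
    Tendsto (fun x => mik (μ + t) σ k x / mik μ σ k x) atTop (nhds 0) := by
  rw [Metric.tendsto_nhds]
  intro ε hε
  obtain ⟨δ₀, hδ₀, hδ⟩ := pdf_shift_le hσ ht (half_pos hε)
  obtain ⟨c₁, hc₁, hlb⟩ := mik_lb (μ := μ) hσ k (show (0:ℝ) < δ₀/4 by linarith)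
  set Mk : ℝ := ∫ α in Set.Ioi (0:ℝ), α ^ k * lognormalPdf (μ+t) σ α with hMkdef
  have hMkint := integrableOn_moment (μ := μ + t) hσ k
  have hMk0 : 0 ≤ Mk := by
    rw [hMkdef]
    apply integral_nonneg_of_ae
    filter_upwards [ae_restrict_mem measurableSet_Ioi] with α hα
    exact mul_nonneg (pow_nonneg (le_of_lt hα) k) (lognormalPdf_pos hσ hα).le
  -- main pointwise-in-x estimate
  have key : ∀ x : ℝ, 0 ≤ x →
      mik (μ+t) σ k x ≤ ε/2 * mik μ σ k x + Real.exp (-δ₀ * x) * Mk := by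
    intro x hx
    have hsub1 : Set.Ioc (0:ℝ) δ₀ ⊆ Set.Ioi 0 := Set.Ioc_subset_Ioi_self
    have hsub2 : Set.Ioi δ₀ ⊆ Set.Ioi (0:ℝ) := Set.Ioi_subset_Ioi hδ₀.le
    have hint' := integrableOn_mik (μ := μ + t) hσ k hx
    have hint := integrableOn_mik (μ := μ) hσ k hx
    have hsplit : mik (μ+t) σ k x
        = (∫ α in Set.Ioc (0:ℝ) δ₀, α ^ k * Real.exp (-α*x) * lognormalPdf (μ+t) σ α)
          + ∫ α in Set.Ioi δ₀, α ^ k * Real.exp (-α*x) * lognormalPdf (μ+t) σ α := by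
      rw [mik, ← Set.Ioc_union_Ioi_eq_Ioi hδ₀.le]
      exact setIntegral_union (Set.Ioc_disjoint_Ioi le_rfl) measurableSet_Ioi
        (hint'.mono_set hsub1) (hint'.mono_set hsub2)
    have hp1 : (∫ α in Set.Ioc (0:ℝ) δ₀, α ^ k * Real.exp (-α*x) * lognormalPdf (μ+t) σ α)
        ≤ ε/2 * mik μ σ k x := by
      calc (∫ α in Set.Ioc (0:ℝ) δ₀, α ^ k * Real.exp (-α*x) * lognormalPdf (μ+t) σ α)
          ≤ ∫ α in Set.Ioc (0:ℝ) δ₀, ε/2 * (α ^ k * Real.exp (-α*x) * lognormalPdf μ σ α) := by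
            apply setIntegral_mono_on (hint'.mono_set hsub1)
              ((hint.mono_set hsub1).const_mul _) measurableSet_Ioc
            intro α hα
            have h1 := hδ α hα.1 hα.2
            have h2 : (0:ℝ) ≤ α ^ k * Real.exp (-α*x) :=
              mul_nonneg (pow_nonneg hα.1.le k) (Real.exp_pos _).le
            calc α ^ k * Real.exp (-α*x) * lognormalPdf (μ+t) σ α
                ≤ α ^ k * Real.exp (-α*x) * (ε/2 * lognormalPdf μ σ α) :=
                  mul_le_mul_of_nonneg_left h1 h2
              _ = ε/2 * (α ^ k * Real.exp (-α*x) * lognormalPdf μ σ α) := by ring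
        _ = ε/2 * ∫ α in Set.Ioc (0:ℝ) δ₀, α ^ k * Real.exp (-α*x) * lognormalPdf μ σ α := by
            rw [integral_const_mul]
        _ ≤ ε/2 * mik μ σ k x := by
            apply mul_le_mul_of_nonneg_left _ (by linarith)
            exact setIntegral_mono_set hint (mik_integrand_nonneg hσ k x)
              (HasSubset.Subset.eventuallyLE hsub1)
    have hp2 : (∫ α in Set.Ioi δ₀, α ^ k * Real.exp (-α*x) * lognormalPdf (μ+t) σ α)
        ≤ Real.exp (-δ₀ * x) * Mk := by
      calc (∫ α in Set.Ioi δ₀, α ^ k * Real.exp (-α*x) * lognormalPdf (μ+t) σ α)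
          ≤ ∫ α in Set.Ioi δ₀, Real.exp (-δ₀*x) * (α ^ k * lognormalPdf (μ+t) σ α) := by
            apply setIntegral_mono_on (hint'.mono_set hsub2)
              ((hMkint.mono_set hsub2).const_mul _) measurableSet_Ioi
            intro α hα
            have hα0 : (0:ℝ) < α := lt_trans hδ₀ hα
            have h1 : Real.exp (-α*x) ≤ Real.exp (-δ₀*x) :=
              Real.exp_le_exp.2 (by nlinarith [le_of_lt (show δ₀ < α from hα)])
            have hpdf := (lognormalPdf_pos (μ := μ + t) hσ hα0).le
            calc α ^ k * Real.exp (-α*x) * lognormalPdf (μ+t) σ α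
                ≤ α ^ k * Real.exp (-δ₀*x) * lognormalPdf (μ+t) σ α := by
                  apply mul_le_mul_of_nonneg_right _ hpdf
                  exact mul_le_mul_of_nonneg_left h1 (pow_nonneg hα0.le k)
              _ = Real.exp (-δ₀*x) * (α ^ k * lognormalPdf (μ+t) σ α) := by ring
        _ = Real.exp (-δ₀*x) * ∫ α in Set.Ioi δ₀, α ^ k * lognormalPdf (μ+t) σ α := by
            rw [integral_const_mul]
        _ ≤ Real.exp (-δ₀ * x) * Mk := by
            apply mul_le_mul_of_nonneg_left _ (Real.exp_pos _).le
            rw [hMkdef]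
            apply setIntegral_mono_set hMkint ?_ (HasSubset.Subset.eventuallyLE hsub2)
            filter_upwards [ae_restrict_mem measurableSet_Ioi] with α hα
            exact mul_nonneg (pow_nonneg (le_of_lt hα) k) (lognormalPdf_pos hσ hα).le
    linarith [hsplit, hp1, hp2]
  -- tail tendsto
  have htail : Tendsto (fun x : ℝ => Mk/c₁ * Real.exp (-(3*δ₀/4) * x)) atTop (nhds 0) := by
    have h1 : Tendsto (fun x : ℝ => -(3*δ₀/4) * x) atTop atBot :=
      tendsto_id.const_mul_atTop_of_neg (by linarith)
    have h2 := Real.tendsto_exp_atBot.comp h1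
    have h3 := h2.const_mul (Mk/c₁)
    simpa using h3
  filter_upwards [htail.eventually (gt_mem_nhds (half_pos hε)), eventually_ge_atTop (0:ℝ)]
    with x hx1 hx0
  have hmikpos := mik_pos (μ := μ) hσ k hx0
  have hmik'0 : 0 ≤ mik (μ+t) σ k x := mik_nonneg hσ k x
  have hratio : mik (μ+t) σ k x / mik μ σ k x ≤ ε/2 + Mk/c₁ * Real.exp (-(3*δ₀/4) * x) := by
    rw [div_le_iff₀ hmikpos]
    have hlbx := hlb x hx0
    have h4 : Real.exp (-δ₀ * x) * Mk ≤ (Mk/c₁ * Real.exp (-(3*δ₀/4) * x)) * mik μ σ k x := by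
      calc Real.exp (-δ₀ * x) * Mk
          = (Mk/c₁ * Real.exp (-(3*δ₀/4) * x)) * (c₁ * Real.exp (-(δ₀/4) * x)) := by
            have hee : Real.exp (-(3*δ₀/4) * x) * Real.exp (-(δ₀/4) * x)
                = Real.exp (-δ₀ * x) := by
              rw [← Real.exp_add]; ring_nf
            rw [← hee]; field_simp
        _ ≤ (Mk/c₁ * Real.exp (-(3*δ₀/4) * x)) * mik μ σ k x := by
            apply mul_le_mul_of_nonneg_left hlbx
            positivity
    calc mik (μ+t) σ k x ≤ ε/2 * mik μ σ k x + Real.exp (-δ₀ * x) * Mk := key x hx0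
      _ ≤ ε/2 * mik μ σ k x + (Mk/c₁ * Real.exp (-(3*δ₀/4) * x)) * mik μ σ k x := by linarith
      _ = (ε/2 + Mk/c₁ * Real.exp (-(3*δ₀/4) * x)) * mik μ σ k x := by ring
  rw [Real.dist_eq, sub_zero, abs_of_nonneg (div_nonneg hmik'0 hmikpos.le)]
  linarith

end shift

section scale
variable {μ σ : ℝ}

lemma pdf_scale (hσ : 0 < σ) {c β : ℝ} (hc : 0 < c) (hβ : 0 < β) :
    c⁻¹ * lognormalPdf μ σ (β/c) = lognormalPdf (μ + Real.log c) σ β := by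
  unfold lognormalPdf
  rw [Real.log_div (ne_of_gt hβ) (ne_of_gt hc)]
  have h1 : -(Real.log β - Real.log c - μ)^2 = -(Real.log β - (μ + Real.log c))^2 := by ring
  rw [h1]
  have h2 : β / c ≠ 0 := by positivity
  field_simp

lemma mik_scale_le (hσ : 0 < σ) (k : ℕ) {c x : ℝ} (hc : 1 < c) (hx : 0 ≤ x) :
    mik μ σ k (c*x) ≤ mik (μ + Real.log c) σ k x := by
  have hc0 : (0:ℝ) < c := lt_trans one_pos hc
  set G : ℝ → ℝ := fun β => (β/c)^k * Real.exp (-β*x) * lognormalPdf μ σ (β/c) with hG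
  have h1 : mik μ σ k (c*x) = ∫ α in Set.Ioi (0:ℝ), G (c*α) := by
    rw [mik]
    apply setIntegral_congr_fun measurableSet_Ioi
    intro α hα
    have : c * α / c = α := by field_simp
    simp only [hG, this]
    ring_nf
  have h2 : (∫ α in Set.Ioi (0:ℝ), G (c*α)) = c⁻¹ * ∫ β in Set.Ioi (0:ℝ), G β := by
    have := integral_comp_mul_left_Ioi G 0 hc0
    rw [mul_zero] at this
    rw [this, smul_eq_mul]
  have h3 : c⁻¹ * (∫ β in Set.Ioi (0:ℝ), G β) = ∫ β in Set.Ioi (0:ℝ), c⁻¹ * G β := by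
    rw [integral_const_mul]
  have hint' := integrableOn_mik (μ := μ + Real.log c) hσ k hx
  have h4 : (∫ β in Set.Ioi (0:ℝ), c⁻¹ * G β) ≤ mik (μ + Real.log c) σ k x := by
    rw [mik]
    apply setIntegral_mono_on _ hint' measurableSet_Ioi
    · intro β hβ
      have hβ0 : (0:ℝ) < β := hβ
      have he : c⁻¹ * G β = (β/c)^k * Real.exp (-β*x) * lognormalPdf (μ + Real.log c) σ β := by
        rw [hG, ← pdf_scale hσ hc0 hβ0]; ring
      rw [he]
      apply mul_le_mul_of_nonneg_right _ (lognormalPdf_pos hσ hβ0).le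
      apply mul_le_mul_of_nonneg_right _ (Real.exp_pos _).le
      apply pow_le_pow_left₀ (by positivity)
      rw [div_le_iff₀ hc0]
      nlinarith
    · -- integrability of c⁻¹ * G on Ioi 0
      apply hint'.mono' ?_ ?_
      · have : Measurable G := by
          apply Measurable.mul
          apply Measurable.mul
          · exact (measurable_id.div_const c).pow_const k
          · measurability
          · exact measurable_lognormalPdf.comp (measurable_id.div_const c)
        exact (this.const_mul c⁻¹).aestronglyMeasurable
      · filter_upwards [ae_restrict_mem measurableSet_Ioi] with β hβ
        have hβ0 : (0:ℝ) < β := hβ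
        have he : c⁻¹ * G β = (β/c)^k * Real.exp (-β*x) * lognormalPdf (μ + Real.log c) σ β := by
          rw [hG, ← pdf_scale hσ hc0 hβ0]; ring
        rw [Real.norm_eq_abs, he, abs_of_nonneg (by
          have := (lognormalPdf_pos (μ := μ + Real.log c) hσ hβ0).le
          positivity)]
        apply mul_le_mul_of_nonneg_right _ (lognormalPdf_pos hσ hβ0).le
        apply mul_le_mul_of_nonneg_right _ (Real.exp_pos _).le
        apply pow_le_pow_left₀ (by positivity)
        rw [div_le_iff₀ hc0]
        nlinarith
  linarith [h1, h2, h3, h4]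

lemma mik_ratio_tendsto (hσ : 0 < σ) (k : ℕ) {c : ℝ} (hc : 1 < c) :
    Tendsto (fun x => mik μ σ k (c*x) / mik μ σ k x) atTop (nhds 0) := by
  have ht : 0 < Real.log c := Real.log_pos hc
  refine tendsto_of_tendsto_of_tendsto_of_le_of_le' tendsto_const_nhds
    (mik_shift_tendsto (μ := μ) hσ k ht) ?_ ?_
  · filter_upwards [eventually_ge_atTop (0:ℝ)] with x hx
    exact div_nonneg (mik_nonneg hσ k _) (mik_nonneg hσ k _)
  · filter_upwards [eventually_ge_atTop (0:ℝ)] with x hx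
    exact (div_le_div_iff_of_pos_right (mik_pos hσ k hx)).2 (mik_scale_le hσ k hc hx)

end scale

section share
variable {J : ℕ} (δ : Fin J → ℝ) (j : Fin J) (q : Fin J → ℝ) (α : ℝ)

lemma sum_exp_nonneg : (0:ℝ) ≤ ∑ l, Real.exp (δ l - α * q l) :=
  Finset.sum_nonneg fun l _ => (Real.exp_pos _).le

lemma denom_pos : (0:ℝ) < 1 + ∑ l, Real.exp (δ l - α * q l) := by
  linarith [sum_exp_nonneg δ q α]

lemma logitShare_pos : 0 < logitShare δ j q α :=
  div_pos (Real.exp_pos _) (denom_pos δ q α)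

lemma logitShare_le_one : logitShare δ j q α ≤ 1 := by
  rw [logitShare, div_le_one (denom_pos δ q α)]
  have h := Finset.single_le_sum (f := fun l => Real.exp (δ l - α * q l))
    (fun l _ => (Real.exp_pos _).le) (Finset.mem_univ j)
  linarith

lemma logitShare_le_exp : logitShare δ j q α ≤ Real.exp (δ j - α * q j) := by
  rw [logitShare]
  apply div_le_self (Real.exp_pos _).le
  linarith [sum_exp_nonneg δ q α]

lemma logitShare_ge :
    Real.exp (δ j - α * q j) * (1 - ∑ l, Real.exp (δ l - α * q l)) ≤ logitShare δ j q α := by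
  rw [logitShare, le_div_iff₀ (denom_pos δ q α)]
  have h1 := sum_exp_nonneg δ q α
  have h2 := (Real.exp_pos (δ j - α * q j)).le
  nlinarith [sq_nonneg (∑ l, Real.exp (δ l - α * q l))]

lemma measurable_logitShare : Measurable (logitShare δ j q) := by
  unfold logitShare
  apply Measurable.div
  · measurability
  · apply Measurable.add measurable_const
    apply Finset.measurable_sum
    intro l _
    measurability

lemma hasDerivAt_logitShare (t : ℝ) :
    HasDerivAt (fun s => logitShare δ j (Function.update q j s) α)
      (-α * logitShare δ j (Function.update q j t) α *
        (1 - logitShare δ j (Function.update q j t) α)) t := by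
  classical
  set S₀ : ℝ := ∑ l ∈ Finset.univ.erase j, Real.exp (δ l - α * q l) with hS₀
  have hS₀0 : 0 ≤ S₀ := Finset.sum_nonneg fun l _ => (Real.exp_pos _).le
  have hE : ∀ s : ℝ, (∑ l, Real.exp (δ l - α * Function.update q j s l))
      = Real.exp (δ j - α * s) + S₀ := by
    intro s
    rw [← Finset.add_sum_erase _ _ (Finset.mem_univ j)]
    congr 1
    · rw [Function.update_self]
    · apply Finset.sum_congr rfl
      intro l hl
      rw [Function.update_of_ne (Finset.ne_of_mem_erase hl)]
  have hfun : (fun s => logitShare δ j (Function.update q j s) α)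
      = fun s => Real.exp (δ j - α * s) / (1 + (Real.exp (δ j - α * s) + S₀)) := by
    funext s
    rw [logitShare, hE s, Function.update_self]
  have hinner : ∀ s : ℝ, HasDerivAt (fun w : ℝ => δ j - α * w) (-α) s := by
    intro s
    simpa using ((hasDerivAt_id s).const_mul α).const_sub (δ j)
  have hnum : HasDerivAt (fun s => Real.exp (δ j - α * s))
      (Real.exp (δ j - α * t) * (-α)) t := (hinner t).exp
  have hden : HasDerivAt (fun s => 1 + (Real.exp (δ j - α * s) + S₀))
      (Real.exp (δ j - α * t) * (-α)) t := ((hnum.add_const S₀).const_add 1)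
  have hDpos : (0:ℝ) < 1 + (Real.exp (δ j - α * t) + S₀) := by
    have := Real.exp_pos (δ j - α * t); linarith
  have hdiv := hnum.div hden (ne_of_gt hDpos)
  rw [hfun]
  refine hdiv.congr_deriv ?_
  have hsval : logitShare δ j (Function.update q j t) α
      = Real.exp (δ j - α * t) / (1 + (Real.exp (δ j - α * t) + S₀)) := by
    rw [logitShare, hE t, Function.update_self]
  rw [hsval]
  field_simp
  ring

end share

section derivs
variable {μ σ : ℝ}

lemma lnLaplace_eq_mik (x : ℝ) : lnLaplace μ σ x = mik μ σ 0 x := by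
  rw [lnLaplace, mik]
  simp only [pow_zero, one_mul]

lemma hasDerivAt_lnLaplace (hσ : 0 < σ) {x : ℝ} (hx : 0 < x) :
    HasDerivAt (lnLaplace μ σ) (-(mik μ σ 1 x)) x := by
  have hmono1 : Integrable (fun α => α * lognormalPdf μ σ α)
      (volume.restrict (Set.Ioi (0:ℝ))) := by
    have := integrableOn_moment (μ := μ) hσ 1
    simp at this; exact this
  have h := hasDerivAt_integral_of_dominated_loc_of_deriv_le
    (F := fun y α => Real.exp (-α * y) * lognormalPdf μ σ α)
    (F' := fun y α => -(α * Real.exp (-α * y) * lognormalPdf μ σ α))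
    (x₀ := x) (s := Metric.ball x (x/2)) (μ := volume.restrict (Set.Ioi (0:ℝ)))
    (bound := fun α => α * lognormalPdf μ σ α)
    (Metric.ball_mem_nhds x (half_pos hx)) ?meas ?int ?meas' ?bnd ?bint ?diff
  case meas =>
    filter_upwards with y
    exact ((by measurability : Measurable fun α : ℝ => Real.exp (-α * y)).mul
      measurable_lognormalPdf).aestronglyMeasurable
  case int =>
    have := integrableOn_mik (μ := μ) hσ 0 hx.le
    simp only [pow_zero, one_mul] at this; exact this
  case meas' =>
    apply Measurable.aestronglyMeasurable
    exact ((measurable_id.mul (by measurability : Measurable fun α : ℝ =>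
      Real.exp (-α * x))).mul measurable_lognormalPdf).neg
  case bnd =>
    filter_upwards [ae_restrict_mem measurableSet_Ioi] with α hα y hy
    have hα0 : (0:ℝ) < α := hα
    have hy0 : 0 < y := by
      rw [Metric.mem_ball, Real.dist_eq, abs_lt] at hy
      linarith [hy.1]
    have hpdf := (lognormalPdf_pos (μ := μ) hσ hα0).le
    rw [norm_neg, Real.norm_eq_abs, abs_of_nonneg (by positivity)]
    have h1 : Real.exp (-α * y) ≤ 1 := Real.exp_le_one_iff.2 (by nlinarith)
    calc α * Real.exp (-α * y) * lognormalPdf μ σ α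
        ≤ α * 1 * lognormalPdf μ σ α := by
          apply mul_le_mul_of_nonneg_right _ hpdf
          exact mul_le_mul_of_nonneg_left h1 hα0.le
      _ = α * lognormalPdf μ σ α := by ring
  case bint => exact hmono1
  case diff =>
    filter_upwards with α y _
    have hlin : HasDerivAt (fun w : ℝ => -α * w) (-α) y := by
      simpa using (hasDerivAt_id y).const_mul (-α)
    have := (hlin.exp).mul_const (lognormalPdf μ σ α)
    refine this.congr_deriv ?_
    ring
  have h2 := h.2
  have h3 : (∫ α in Set.Ioi (0:ℝ), -(α * Real.exp (-α * x) * lognormalPdf μ σ α))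
      = -(mik μ σ 1 x) := by
    rw [integral_neg, mik]
    simp only [pow_one]
  rw [h3] at h2
  exact h2

lemma deriv_lnLaplace (hσ : 0 < σ) {x : ℝ} (hx : 0 < x) :
    deriv (lnLaplace μ σ) x = -(mik μ σ 1 x) := (hasDerivAt_lnLaplace hσ hx).deriv

variable {J : ℕ} (δ : Fin J → ℝ) (j : Fin J)

lemma integrableOn_shareA (hσ : 0 < σ) (q : Fin J → ℝ) :
    IntegrableOn (fun α => logitShare δ j q α * lognormalPdf μ σ α) (Set.Ioi (0:ℝ)) := by
  have hpdfint : IntegrableOn (lognormalPdf μ σ) (Set.Ioi (0:ℝ)) := by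
    have := integrableOn_moment (μ := μ) hσ 0
    simpa using this
  apply hpdfint.mono' ((measurable_logitShare δ j q).mul
    measurable_lognormalPdf).aestronglyMeasurable
  filter_upwards [ae_restrict_mem measurableSet_Ioi] with α hα
  have hpdf := (lognormalPdf_pos (μ := μ) hσ (show (0:ℝ) < α from hα)).le
  have h1 := logitShare_pos δ j q α
  have h2 := logitShare_le_one δ j q α
  rw [Real.norm_eq_abs, Pi.mul_apply, abs_of_nonneg (mul_nonneg h1.le hpdf)]
  nlinarith

lemma pd_qLN (hσ : 0 < σ) (M : ℝ) (q : Fin J → ℝ) (hq : 0 < q j) :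
    pd (qLN δ M μ σ j) j q = M * ∫ α in Set.Ioi (0:ℝ),
      -α * logitShare δ j q α * (1 - logitShare δ j q α) * lognormalPdf μ σ α := by
  have hbint : Integrable (fun α => Real.exp (δ j) * (α * lognormalPdf μ σ α))
      (volume.restrict (Set.Ioi (0:ℝ))) := by
    have := integrableOn_moment (μ := μ) hσ 1
    simp only [pow_one] at this
    exact this.const_mul _
  have h := hasDerivAt_integral_of_dominated_loc_of_deriv_le
    (F := fun t α => logitShare δ j (Function.update q j t) α * lognormalPdf μ σ α)
    (F' := fun t α => -α * logitShare δ j (Function.update q j t) α *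
      (1 - logitShare δ j (Function.update q j t) α) * lognormalPdf μ σ α)
    (x₀ := q j) (s := Metric.ball (q j) (q j)) (μ := volume.restrict (Set.Ioi (0:ℝ)))
    (bound := fun α => Real.exp (δ j) * (α * lognormalPdf μ σ α))
    (Metric.ball_mem_nhds (q j) hq) ?meas ?int ?meas' ?bnd ?bint ?diff
  case meas =>
    filter_upwards with t
    exact ((measurable_logitShare δ j _).mul measurable_lognormalPdf).aestronglyMeasurable
  case int => exact integrableOn_shareA δ j hσ _
  case meas' =>
    apply Measurable.aestronglyMeasurable
    exact ((measurable_id.neg.mul (measurable_logitShare δ j _)).mul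
      ((measurable_logitShare δ j _).const_sub 1)).mul measurable_lognormalPdf
  case bnd =>
    filter_upwards [ae_restrict_mem measurableSet_Ioi] with α hα t ht
    have hα0 : (0:ℝ) < α := hα
    have ht0 : 0 < t := by
      rw [Metric.mem_ball, Real.dist_eq, abs_lt] at ht
      linarith [ht.1]
    set s := logitShare δ j (Function.update q j t) α with hs
    have h1 := logitShare_pos δ j (Function.update q j t) α
    have h2 := logitShare_le_one δ j (Function.update q j t) α
    have hpdf := (lognormalPdf_pos (μ := μ) hσ hα0).le
    rw [← hs] at h1 h2
    have hrw : -α * s * (1 - s) * lognormalPdf μ σ α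
        = -(α * s * (1 - s) * lognormalPdf μ σ α) := by ring
    rw [hrw, norm_neg, Real.norm_eq_abs, abs_of_nonneg
      (mul_nonneg (mul_nonneg (mul_nonneg hα0.le h1.le) (by linarith)) hpdf)]
    have hse : s ≤ Real.exp (δ j) := by
      refine le_trans (logitShare_le_exp δ j _ α) ?_
      apply Real.exp_le_exp.2
      have : Function.update q j t j = t := Function.update_self j t q
      rw [this]
      nlinarith
    calc α * s * (1 - s) * lognormalPdf μ σ α
        ≤ α * s * 1 * lognormalPdf μ σ α := by
          apply mul_le_mul_of_nonneg_right _ hpdf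
          apply mul_le_mul_of_nonneg_left (by linarith) (by positivity)
      _ ≤ α * Real.exp (δ j) * 1 * lognormalPdf μ σ α := by
          apply mul_le_mul_of_nonneg_right _ hpdf
          apply mul_le_mul_of_nonneg_right _ (by norm_num)
          exact mul_le_mul_of_nonneg_left hse hα0.le
      _ = Real.exp (δ j) * (α * lognormalPdf μ σ α) := by ring
  case bint => exact hbint
  case diff =>
    filter_upwards with α t _
    exact (hasDerivAt_logitShare δ j q α t).mul_const (lognormalPdf μ σ α)
  have h2 := (h.2.const_mul M)
  have hupdate : Function.update q j (q j) = q := Function.update_eq_self j q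
  have hfeq : (fun t => qLN δ M μ σ j (Function.update q j t))
      = fun t => M * ∫ α in Set.Ioi (0:ℝ),
        logitShare δ j (Function.update q j t) α * lognormalPdf μ σ α := rfl
  rw [pd, hfeq]
  rw [show (q j) = Function.update q j (q j) j from by rw [hupdate]] at h2 ⊢
  rw [hupdate] at h2 ⊢
  rw [h2.deriv]
  congr 1
  apply setIntegral_congr_fun measurableSet_Ioi
  intro α _
  rw [hupdate]

end derivs

section bounds
variable {μ σ : ℝ} {J : ℕ}

lemma exp_sub_eq (a b : ℝ) : Real.exp (a - b) = Real.exp a * Real.exp (-b) := by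
  rw [← Real.exp_add, sub_eq_add_neg]

lemma mik0_eq (x : ℝ) :
    (∫ α in Set.Ioi (0:ℝ), Real.exp (-(α * x)) * lognormalPdf μ σ α) = mik μ σ 0 x := by
  rw [mik]; congr 1; funext α; simp only [pow_zero, one_mul, neg_mul]

lemma mik1_eq (x : ℝ) :
    (∫ α in Set.Ioi (0:ℝ), α * Real.exp (-(α * x)) * lognormalPdf μ σ α) = mik μ σ 1 x := by
  rw [mik]; congr 1; funext α; simp only [pow_one, neg_mul]

lemma integrableOn_exp_pdf (hσ : 0 < σ) {x : ℝ} (hx : 0 ≤ x) :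
    IntegrableOn (fun α => Real.exp (-(α * x)) * lognormalPdf μ σ α) (Set.Ioi (0:ℝ)) := by
  have := integrableOn_mik (μ := μ) hσ 0 hx
  simp only [pow_zero, one_mul, neg_mul] at this
  exact this

lemma integrableOn_mul_exp_pdf (hσ : 0 < σ) {x : ℝ} (hx : 0 ≤ x) :
    IntegrableOn (fun α => α * Real.exp (-(α * x)) * lognormalPdf μ σ α) (Set.Ioi (0:ℝ)) := by
  have := integrableOn_mik (μ := μ) hσ 1 hx
  simp only [pow_one, neg_mul] at this
  exact this

variable (δ : Fin J → ℝ) (j : Fin J)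

lemma integrableOn_shareB (hσ : 0 < σ) (q : Fin J → ℝ) :
    IntegrableOn (fun α => α * logitShare δ j q α * (1 - logitShare δ j q α) *
      lognormalPdf μ σ α) (Set.Ioi (0:ℝ)) := by
  have hmom : IntegrableOn (fun α : ℝ => α * lognormalPdf μ σ α) (Set.Ioi (0:ℝ)) := by
    have := integrableOn_moment (μ := μ) hσ 1
    simpa using this
  apply hmom.mono' (((measurable_id.mul (measurable_logitShare δ j q)).mul
    ((measurable_logitShare δ j q).const_sub 1)).mul measurable_lognormalPdf).aestronglyMeasurable
  filter_upwards [ae_restrict_mem measurableSet_Ioi] with α hα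
  have hα0 : (0:ℝ) < α := hα
  have h1 := logitShare_pos δ j q α
  have h2 := logitShare_le_one δ j q α
  have hpdf := (lognormalPdf_pos (μ := μ) hσ hα0).le
  simp only [id_eq, Pi.mul_apply]
  rw [Real.norm_eq_abs, abs_of_nonneg (mul_nonneg (mul_nonneg
    (mul_nonneg hα0.le h1.le) (by linarith)) hpdf)]
  have hss : logitShare δ j q α * (1 - logitShare δ j q α) ≤ 1 := by nlinarith
  calc α * logitShare δ j q α * (1 - logitShare δ j q α) * lognormalPdf μ σ α
      = (logitShare δ j q α * (1 - logitShare δ j q α)) * (α * lognormalPdf μ σ α) := by ring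
    _ ≤ 1 * (α * lognormalPdf μ σ α) :=
        mul_le_mul_of_nonneg_right hss (mul_nonneg hα0.le hpdf)
    _ = α * lognormalPdf μ σ α := one_mul _

lemma A_upper (hσ : 0 < σ) (q : Fin J → ℝ) (hq : 0 < q j) :
    (∫ α in Set.Ioi (0:ℝ), logitShare δ j q α * lognormalPdf μ σ α)
      ≤ Real.exp (δ j) * mik μ σ 0 (q j) := by
  rw [← mik0_eq, ← integral_const_mul]
  apply setIntegral_mono_on (integrableOn_shareA δ j hσ q)
    ((integrableOn_exp_pdf hσ hq.le).const_mul _) measurableSet_Ioi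
  intro α hα
  have hpdf := (lognormalPdf_pos (μ := μ) hσ (show (0:ℝ) < α from hα)).le
  have h1 := logitShare_le_exp δ j q α
  calc logitShare δ j q α * lognormalPdf μ σ α
      ≤ Real.exp (δ j - α * q j) * lognormalPdf μ σ α :=
        mul_le_mul_of_nonneg_right h1 hpdf
    _ = Real.exp (δ j) * (Real.exp (-(α * q j)) * lognormalPdf μ σ α) := by
        rw [exp_sub_eq]; ring

lemma B_upper (hσ : 0 < σ) (q : Fin J → ℝ) (hq : 0 < q j) :
    (∫ α in Set.Ioi (0:ℝ), α * logitShare δ j q α * (1 - logitShare δ j q α) *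
      lognormalPdf μ σ α) ≤ Real.exp (δ j) * mik μ σ 1 (q j) := by
  rw [← mik1_eq, ← integral_const_mul]
  apply setIntegral_mono_on (integrableOn_shareB δ j hσ q)
    ((integrableOn_mul_exp_pdf hσ hq.le).const_mul _) measurableSet_Ioi
  intro α hα
  have hα0 : (0:ℝ) < α := hα
  have hpdf := (lognormalPdf_pos (μ := μ) hσ hα0).le
  have h1 := logitShare_le_exp δ j q α
  have h2 := logitShare_le_one δ j q α
  have h3 := logitShare_pos δ j q α
  calc α * logitShare δ j q α * (1 - logitShare δ j q α) * lognormalPdf μ σ α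
      ≤ α * Real.exp (δ j - α * q j) * 1 * lognormalPdf μ σ α := by
        apply mul_le_mul_of_nonneg_right _ hpdf
        have : logitShare δ j q α * (1 - logitShare δ j q α) ≤ Real.exp (δ j - α * q j) * 1 := by
          nlinarith
        calc α * logitShare δ j q α * (1 - logitShare δ j q α)
            = α * (logitShare δ j q α * (1 - logitShare δ j q α)) := by ring
          _ ≤ α * (Real.exp (δ j - α * q j) * 1) := mul_le_mul_of_nonneg_left this hα0.le
          _ = α * Real.exp (δ j - α * q j) * 1 := by ring
    _ = Real.exp (δ j) * (α * Real.exp (-(α * q j)) * lognormalPdf μ σ α) := by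
        rw [exp_sub_eq]; ring

lemma A_lower (hσ : 0 < σ) (q : Fin J → ℝ) (hq : ∀ i, 0 < q i) :
    Real.exp (δ j) * mik μ σ 0 (q j)
      - (∑ l, Real.exp (δ j) * Real.exp (δ l) * mik μ σ 0 (q j + q l))
    ≤ ∫ α in Set.Ioi (0:ℝ), logitShare δ j q α * lognormalPdf μ σ α := by
  set G : ℝ → ℝ := fun α => Real.exp (δ j) * (Real.exp (-(α * q j)) * lognormalPdf μ σ α)
    - ∑ l, Real.exp (δ j) * Real.exp (δ l) *
        (Real.exp (-(α * (q j + q l))) * lognormalPdf μ σ α) with hG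
  have hint1 : IntegrableOn (fun α => Real.exp (δ j) *
      (Real.exp (-(α * q j)) * lognormalPdf μ σ α)) (Set.Ioi (0:ℝ)) :=
    (integrableOn_exp_pdf hσ (hq j).le).const_mul _
  have hintl : ∀ l : Fin J, IntegrableOn (fun α => Real.exp (δ j) * Real.exp (δ l) *
      (Real.exp (-(α * (q j + q l))) * lognormalPdf μ σ α)) (Set.Ioi (0:ℝ)) := fun l =>
    (integrableOn_exp_pdf hσ (by have := hq j; have := hq l; linarith : (0:ℝ) ≤ q j + q l)).const_mul _
  have hintsum : IntegrableOn (fun α => ∑ l, Real.exp (δ j) * Real.exp (δ l) *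
      (Real.exp (-(α * (q j + q l))) * lognormalPdf μ σ α)) (Set.Ioi (0:ℝ)) :=
    integrable_finset_sum _ (fun l _ => hintl l)
  have hGint : IntegrableOn G (Set.Ioi (0:ℝ)) := hint1.sub hintsum
  have hGeq : (∫ α in Set.Ioi (0:ℝ), G α) = Real.exp (δ j) * mik μ σ 0 (q j)
      - (∑ l, Real.exp (δ j) * Real.exp (δ l) * mik μ σ 0 (q j + q l)) := by
    simp only [hG]
    rw [integral_sub hint1 hintsum, integral_const_mul, mik0_eq,
      integral_finset_sum _ (fun l _ => hintl l)]
    congr 1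
    apply Finset.sum_congr rfl
    intro l _
    rw [integral_const_mul, mik0_eq]
  rw [← hGeq]
  apply setIntegral_mono_on hGint (integrableOn_shareA δ j hσ q) measurableSet_Ioi
  intro α hα
  have hα0 : (0:ℝ) < α := hα
  have hpdf := (lognormalPdf_pos (μ := μ) hσ hα0).le
  have key := logitShare_ge δ j q α
  have hid : G α = Real.exp (δ j - α * q j) *
      (1 - ∑ l, Real.exp (δ l - α * q l)) * lognormalPdf μ σ α := by
    rw [hG]
    have e2 : ∀ l : Fin J, Real.exp (-(α * (q j + q l)))
        = Real.exp (-(α * q j)) * Real.exp (-(α * q l)) := by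
      intro l
      rw [← Real.exp_add]
      congr 1
      ring
    simp only [e2, exp_sub_eq]
    calc Real.exp (δ j) * (Real.exp (-(α * q j)) * lognormalPdf μ σ α)
        - ∑ l, Real.exp (δ j) * Real.exp (δ l) *
            (Real.exp (-(α * q j)) * Real.exp (-(α * q l)) * lognormalPdf μ σ α)
        = Real.exp (δ j) * (Real.exp (-(α * q j)) * lognormalPdf μ σ α)
          - ∑ l, (Real.exp (δ l) * Real.exp (-(α * q l))) *
              (Real.exp (δ j) * Real.exp (-(α * q j)) * lognormalPdf μ σ α) := by
          congr 1
          apply Finset.sum_congr rfl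
          intro l _
          ring
      _ = Real.exp (δ j) * (Real.exp (-(α * q j)) * lognormalPdf μ σ α)
          - (∑ l, Real.exp (δ l) * Real.exp (-(α * q l))) *
              (Real.exp (δ j) * Real.exp (-(α * q j)) * lognormalPdf μ σ α) := by
          rw [Finset.sum_mul]
      _ = _ := by ring
  rw [hid]
  exact mul_le_mul_of_nonneg_right key hpdf

lemma B_lower (hσ : 0 < σ) (q : Fin J → ℝ) (hq : ∀ i, 0 < q i) :
    Real.exp (δ j) * mik μ σ 1 (q j)
      - (∑ l, Real.exp (δ j) * Real.exp (δ l) * mik μ σ 1 (q j + q l))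
      - Real.exp (δ j) * Real.exp (δ j) * mik μ σ 1 (q j + q j)
    ≤ ∫ α in Set.Ioi (0:ℝ), α * logitShare δ j q α * (1 - logitShare δ j q α) *
        lognormalPdf μ σ α := by
  set G : ℝ → ℝ := fun α => Real.exp (δ j) * (α * Real.exp (-(α * q j)) * lognormalPdf μ σ α)
    - ∑ l, Real.exp (δ j) * Real.exp (δ l) *
        (α * Real.exp (-(α * (q j + q l))) * lognormalPdf μ σ α)
    - Real.exp (δ j) * Real.exp (δ j) *
        (α * Real.exp (-(α * (q j + q j))) * lognormalPdf μ σ α) with hG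
  have hint1 : IntegrableOn (fun α => Real.exp (δ j) *
      (α * Real.exp (-(α * q j)) * lognormalPdf μ σ α)) (Set.Ioi (0:ℝ)) :=
    (integrableOn_mul_exp_pdf hσ (hq j).le).const_mul _
  have hintl : ∀ l : Fin J, IntegrableOn (fun α => Real.exp (δ j) * Real.exp (δ l) *
      (α * Real.exp (-(α * (q j + q l))) * lognormalPdf μ σ α)) (Set.Ioi (0:ℝ)) := fun l =>
    (integrableOn_mul_exp_pdf hσ (by have := hq j; have := hq l; linarith : (0:ℝ) ≤ q j + q l)).const_mul _
  have hintsum : IntegrableOn (fun α => ∑ l, Real.exp (δ j) * Real.exp (δ l) *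
      (α * Real.exp (-(α * (q j + q l))) * lognormalPdf μ σ α)) (Set.Ioi (0:ℝ)) :=
    integrable_finset_sum _ (fun l _ => hintl l)
  have hintj : IntegrableOn (fun α => Real.exp (δ j) * Real.exp (δ j) *
      (α * Real.exp (-(α * (q j + q j))) * lognormalPdf μ σ α)) (Set.Ioi (0:ℝ)) :=
    (integrableOn_mul_exp_pdf hσ (by have := hq j; linarith : (0:ℝ) ≤ q j + q j)).const_mul _
  have hint12 : IntegrableOn (fun α => Real.exp (δ j) * (α * Real.exp (-(α * q j)) *
      lognormalPdf μ σ α) - ∑ l, Real.exp (δ j) * Real.exp (δ l) *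
      (α * Real.exp (-(α * (q j + q l))) * lognormalPdf μ σ α)) (Set.Ioi (0:ℝ)) :=
    hint1.sub hintsum
  have hGint : IntegrableOn G (Set.Ioi (0:ℝ)) := hint12.sub hintj
  have hGeq : (∫ α in Set.Ioi (0:ℝ), G α) = Real.exp (δ j) * mik μ σ 1 (q j)
      - (∑ l, Real.exp (δ j) * Real.exp (δ l) * mik μ σ 1 (q j + q l))
      - Real.exp (δ j) * Real.exp (δ j) * mik μ σ 1 (q j + q j) := by
    simp only [hG]
    rw [integral_sub hint12 hintj, integral_sub hint1 hintsum,
      integral_const_mul, mik1_eq, integral_const_mul, mik1_eq,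
      integral_finset_sum _ (fun l _ => hintl l)]
    congr 2
    apply Finset.sum_congr rfl
    intro l _
    rw [integral_const_mul, mik1_eq]
  rw [← hGeq]
  apply setIntegral_mono_on hGint (integrableOn_shareB δ j hσ q) measurableSet_Ioi
  intro α hα
  have hα0 : (0:ℝ) < α := hα
  have hpdf := (lognormalPdf_pos (μ := μ) hσ hα0).le
  have key := logitShare_ge δ j q α
  have hle := logitShare_le_exp δ j q α
  have h3 := logitShare_pos δ j q α
  -- pointwise: G α ≤ α * s * (1-s) * pdf
  have hs2 : logitShare δ j q α * logitShare δ j q α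
      ≤ Real.exp (δ j - α * q j) * Real.exp (δ j - α * q j) :=
    mul_le_mul hle hle h3.le (Real.exp_pos _).le
  have hptwise : Real.exp (δ j - α * q j) * (1 - ∑ l, Real.exp (δ l - α * q l))
      - Real.exp (δ j - α * q j) * Real.exp (δ j - α * q j)
      ≤ logitShare δ j q α * (1 - logitShare δ j q α) := by
    nlinarith
  have hid : G α = α * (Real.exp (δ j - α * q j) * (1 - ∑ l, Real.exp (δ l - α * q l))
      - Real.exp (δ j - α * q j) * Real.exp (δ j - α * q j)) * lognormalPdf μ σ α := by
    rw [hG]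
    have e2 : ∀ l : Fin J, Real.exp (-(α * (q j + q l)))
        = Real.exp (-(α * q j)) * Real.exp (-(α * q l)) := by
      intro l
      rw [← Real.exp_add]
      congr 1
      ring
    simp only [e2, exp_sub_eq]
    calc Real.exp (δ j) * (α * Real.exp (-(α * q j)) * lognormalPdf μ σ α)
        - ∑ l, Real.exp (δ j) * Real.exp (δ l) *
            (α * (Real.exp (-(α * q j)) * Real.exp (-(α * q l))) * lognormalPdf μ σ α)
        - Real.exp (δ j) * Real.exp (δ j) *
            (α * (Real.exp (-(α * q j)) * Real.exp (-(α * q j))) * lognormalPdf μ σ α)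
        = Real.exp (δ j) * (α * Real.exp (-(α * q j)) * lognormalPdf μ σ α)
          - ∑ l, (Real.exp (δ l) * Real.exp (-(α * q l))) *
              (Real.exp (δ j) * (α * Real.exp (-(α * q j)) * lognormalPdf μ σ α))
          - Real.exp (δ j) * Real.exp (δ j) *
            (α * (Real.exp (-(α * q j)) * Real.exp (-(α * q j))) * lognormalPdf μ σ α) := by
          congr 2
          apply Finset.sum_congr rfl
          intro l _
          ring
      _ = Real.exp (δ j) * (α * Real.exp (-(α * q j)) * lognormalPdf μ σ α)
          - (∑ l, Real.exp (δ l) * Real.exp (-(α * q l))) *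
              (Real.exp (δ j) * (α * Real.exp (-(α * q j)) * lognormalPdf μ σ α))
          - Real.exp (δ j) * Real.exp (δ j) *
            (α * (Real.exp (-(α * q j)) * Real.exp (-(α * q j))) * lognormalPdf μ σ α) := by
          rw [Finset.sum_mul]
      _ = _ := by ring
  rw [hid]
  calc α * (Real.exp (δ j - α * q j) * (1 - ∑ l, Real.exp (δ l - α * q l))
        - Real.exp (δ j - α * q j) * Real.exp (δ j - α * q j)) * lognormalPdf μ σ α
      ≤ α * (logitShare δ j q α * (1 - logitShare δ j q α)) * lognormalPdf μ σ α := by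
        apply mul_le_mul_of_nonneg_right _ hpdf
        exact mul_le_mul_of_nonneg_left hptwise hα0.le
    _ = α * logitShare δ j q α * (1 - logitShare δ j q α) * lognormalPdf μ σ α := by ring

end bounds


/-- Along any ray `p ∈ ℝ_{++}^J`, `η_{jj}(λp)² / m(λ p_j)² → 1` as `λ → ∞`,
where `η_{jj}(p) = ∂_{p_j} q_j(p)/q_j(p)` and `m(x) = −L'(x)/L(x)`. -/
theorem etaLN_own_ray_asymptotics {J : ℕ} (hJ : 1 ≤ J) (M : ℝ) (hM : 0 < M)
    (δ : Fin J → ℝ) (μ σ : ℝ) (hσ : 0 < σ) (j : Fin J)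
    (p : Fin J → ℝ) (hp : ∀ i, 0 < p i) :
    Tendsto (fun l : ℝ =>
        (pd (qLN δ M μ σ j) j (l • p) / qLN δ M μ σ j (l • p)) ^ 2 /
          (-(deriv (lnLaplace μ σ) (l * p j)) / lnLaplace μ σ (l * p j)) ^ 2)
      atTop (nhds 1) := by
  classical
  set A : ℝ → ℝ := fun lam => ∫ α in Set.Ioi (0:ℝ),
    logitShare δ j (lam • p) α * lognormalPdf μ σ α with hA
  set B : ℝ → ℝ := fun lam => ∫ α in Set.Ioi (0:ℝ),
    α * logitShare δ j (lam • p) α * (1 - logitShare δ j (lam • p) α) *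
      lognormalPdf μ σ α with hB
  have hAint : ∀ lam : ℝ, IntegrableOn
      (fun α => logitShare δ j (lam • p) α * lognormalPdf μ σ α) (Set.Ioi (0:ℝ)) :=
    fun lam => integrableOn_shareA δ j hσ _
  have hApos : ∀ lam : ℝ, 0 < A lam := by
    intro lam
    rw [hA]
    rw [setIntegral_pos_iff_support_of_nonneg_ae ?nn (hAint lam)]
    case nn =>
      filter_upwards [ae_restrict_mem measurableSet_Ioi] with α hα
      exact mul_nonneg (logitShare_pos δ j _ α).le
        (lognormalPdf_pos hσ (show (0:ℝ) < α from hα)).le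
    refine lt_of_lt_of_le (b := volume (Set.Ioi (0:ℝ))) (by simp) (measure_mono ?_)
    intro α hα
    refine ⟨ne_of_gt (mul_pos (logitShare_pos δ j _ α)
      (lognormalPdf_pos hσ (show (0:ℝ) < α from hα))), hα⟩
  -- composition with lam ↦ lam * p j
  have hcomp : Tendsto (fun lam : ℝ => lam * p j) atTop atTop :=
    Tendsto.atTop_mul_const (hp j) tendsto_id
  -- ratio terms
  have hterm : ∀ (k : ℕ) (i : Fin J), Tendsto
      (fun lam : ℝ => mik μ σ k (lam * p j + lam * p i) / mik μ σ k (lam * p j))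
      atTop (nhds 0) := by
    intro k i
    have hc : 1 < (p j + p i) / p j := by
      rw [lt_div_iff₀ (hp j)]; linarith [hp i, hp j]
    have h0 := (mik_ratio_tendsto (μ := μ) hσ k hc).comp hcomp
    apply h0.congr
    intro lam
    simp only [Function.comp]
    have hpj : p j ≠ 0 := (hp j).ne'
    have he : (p j + p i) / p j * (lam * p j) = lam * p j + lam * p i := by
      field_simp
    rw [he]
  have hterm2 : ∀ (k : ℕ), Tendsto
      (fun lam : ℝ => mik μ σ k (lam * p j + lam * p j) / mik μ σ k (lam * p j))
      atTop (nhds 0) := by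
    intro k
    have h0 := (mik_ratio_tendsto (μ := μ) hσ k (by norm_num : (1:ℝ) < 2)).comp hcomp
    apply h0.congr
    intro lam
    simp only [Function.comp]
    have he : (2:ℝ) * (lam * p j) = lam * p j + lam * p j := by ring
    rw [he]
  have hsmul : ∀ (lam : ℝ) (i : Fin J), (lam • p) i = lam * p i := fun lam i => rfl
  -- R_A tendsto
  have hRA : Tendsto (fun lam => A lam / (Real.exp (δ j) * mik μ σ 0 (lam * p j)))
      atTop (nhds 1) := by
    have hlow : Tendsto (fun lam : ℝ => 1 - ∑ i, Real.exp (δ i) *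
        (mik μ σ 0 (lam * p j + lam * p i) / mik μ σ 0 (lam * p j)))
        atTop (nhds 1) := by
      have hsum : Tendsto (fun lam : ℝ => ∑ i, Real.exp (δ i) *
          (mik μ σ 0 (lam * p j + lam * p i) / mik μ σ 0 (lam * p j)))
          atTop (nhds 0) := by
        have := tendsto_finset_sum (Finset.univ : Finset (Fin J))
          (fun i _ => (hterm 0 i).const_mul (Real.exp (δ i)))
        simpa using this
      have := tendsto_const_nhds (α := ℝ) (x := (1:ℝ)) (f := atTop).sub hsum
      simpa using this
    refine tendsto_of_tendsto_of_tendsto_of_le_of_le' hlow tendsto_const_nhds ?_ ?_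
    · filter_upwards [eventually_ge_atTop (1:ℝ)] with lam hlam
      have hlam0 : (0:ℝ) < lam := by linarith
      have hq : ∀ i, 0 < (lam • p) i := fun i => by
        rw [hsmul]; exact mul_pos hlam0 (hp i)
      have hx : (0:ℝ) < lam * p j := mul_pos hlam0 (hp j)
      have hLpos := mik_pos (μ := μ) hσ 0 hx.le
      have hd : (0:ℝ) < Real.exp (δ j) * mik μ σ 0 (lam * p j) := by positivity
      rw [le_div_iff₀ hd]
      have hAl := A_lower (μ := μ) δ j hσ (lam • p) hq
      simp only [hsmul] at hAl
      have heq : (1 - ∑ i, Real.exp (δ i) *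
          (mik μ σ 0 (lam * p j + lam * p i) / mik μ σ 0 (lam * p j))) *
            (Real.exp (δ j) * mik μ σ 0 (lam * p j))
          = Real.exp (δ j) * mik μ σ 0 (lam * p j)
            - ∑ i, Real.exp (δ j) * Real.exp (δ i) * mik μ σ 0 (lam * p j + lam * p i) := by
        rw [sub_mul, one_mul, Finset.sum_mul]
        congr 1
        apply Finset.sum_congr rfl
        intro i _
        field_simp [hLpos.ne']
      rw [heq]
      exact hAl
    · filter_upwards [eventually_ge_atTop (1:ℝ)] with lam hlam
      have hlam0 : (0:ℝ) < lam := by linarith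
      have hx : (0:ℝ) < lam * p j := mul_pos hlam0 (hp j)
      have hLpos := mik_pos (μ := μ) hσ 0 hx.le
      have hd : (0:ℝ) < Real.exp (δ j) * mik μ σ 0 (lam * p j) := by positivity
      rw [div_le_one hd]
      have := A_upper (μ := μ) δ j hσ (lam • p) (by rw [hsmul]; exact hx)
      rw [hsmul] at this
      exact this
  -- R_B tendsto
  have hRB : Tendsto (fun lam => B lam / (Real.exp (δ j) * mik μ σ 1 (lam * p j)))
      atTop (nhds 1) := by
    have hlow : Tendsto (fun lam : ℝ => 1 - ∑ i, Real.exp (δ i) *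
        (mik μ σ 1 (lam * p j + lam * p i) / mik μ σ 1 (lam * p j))
        - Real.exp (δ j) *
          (mik μ σ 1 (lam * p j + lam * p j) / mik μ σ 1 (lam * p j)))
        atTop (nhds 1) := by
      have hsum : Tendsto (fun lam : ℝ => ∑ i, Real.exp (δ i) *
          (mik μ σ 1 (lam * p j + lam * p i) / mik μ σ 1 (lam * p j)))
          atTop (nhds 0) := by
        have := tendsto_finset_sum (Finset.univ : Finset (Fin J))
          (fun i _ => (hterm 1 i).const_mul (Real.exp (δ i)))
        simpa using this
      have hj2 := (hterm2 1).const_mul (Real.exp (δ j))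
      rw [mul_zero] at hj2
      have := (tendsto_const_nhds (α := ℝ) (x := (1:ℝ)) (f := atTop).sub hsum).sub hj2
      simpa using this
    refine tendsto_of_tendsto_of_tendsto_of_le_of_le' hlow tendsto_const_nhds ?_ ?_
    · filter_upwards [eventually_ge_atTop (1:ℝ)] with lam hlam
      have hlam0 : (0:ℝ) < lam := by linarith
      have hq : ∀ i, 0 < (lam • p) i := fun i => by
        rw [hsmul]; exact mul_pos hlam0 (hp i)
      have hx : (0:ℝ) < lam * p j := mul_pos hlam0 (hp j)
      have hCpos := mik_pos (μ := μ) hσ 1 hx.le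
      have hd : (0:ℝ) < Real.exp (δ j) * mik μ σ 1 (lam * p j) := by positivity
      rw [le_div_iff₀ hd]
      have hBl := B_lower (μ := μ) δ j hσ (lam • p) hq
      simp only [hsmul] at hBl
      have heq : (1 - ∑ i, Real.exp (δ i) *
          (mik μ σ 1 (lam * p j + lam * p i) / mik μ σ 1 (lam * p j))
          - Real.exp (δ j) * (mik μ σ 1 (lam * p j + lam * p j) / mik μ σ 1 (lam * p j))) *
            (Real.exp (δ j) * mik μ σ 1 (lam * p j))
          = Real.exp (δ j) * mik μ σ 1 (lam * p j)
            - ∑ i, Real.exp (δ j) * Real.exp (δ i) * mik μ σ 1 (lam * p j + lam * p i)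
            - Real.exp (δ j) * Real.exp (δ j) * mik μ σ 1 (lam * p j + lam * p j) := by
        rw [sub_mul, sub_mul, one_mul, Finset.sum_mul]
        congr 1
        · congr 1
          apply Finset.sum_congr rfl
          intro i _
          field_simp [hCpos.ne']
        · field_simp [hCpos.ne']
      rw [heq]
      exact hBl
    · filter_upwards [eventually_ge_atTop (1:ℝ)] with lam hlam
      have hlam0 : (0:ℝ) < lam := by linarith
      have hx : (0:ℝ) < lam * p j := mul_pos hlam0 (hp j)
      have hCpos := mik_pos (μ := μ) hσ 1 hx.le
      have hd : (0:ℝ) < Real.exp (δ j) * mik μ σ 1 (lam * p j) := by positivity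
      rw [div_le_one hd]
      have := B_upper (μ := μ) δ j hσ (lam • p) (by rw [hsmul]; exact hx)
      rw [hsmul] at this
      exact this
  -- combine
  have hW : Tendsto (fun lam => (B lam / (Real.exp (δ j) * mik μ σ 1 (lam * p j))) /
      (A lam / (Real.exp (δ j) * mik μ σ 0 (lam * p j)))) atTop (nhds 1) := by
    have := hRB.div hRA one_ne_zero
    rw [div_one] at this; exact this
  have hW2 : Tendsto (fun lam => ((B lam / (Real.exp (δ j) * mik μ σ 1 (lam * p j))) /
      (A lam / (Real.exp (δ j) * mik μ σ 0 (lam * p j)))) ^ 2) atTop (nhds 1) := by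
    have := hW.pow 2
    norm_num at this
    exact this
  refine Tendsto.congr' ?_ hW2
  filter_upwards [eventually_ge_atTop (1:ℝ)] with lam hlam
  have hlam0 : (0:ℝ) < lam := by linarith
  have hx : (0:ℝ) < lam * p j := mul_pos hlam0 (hp j)
  have hLpos := mik_pos (μ := μ) hσ 0 hx.le
  have hCpos := mik_pos (μ := μ) hσ 1 hx.le
  have hApos' := hApos lam
  -- identify all four quantities
  have hqval : qLN δ M μ σ j (lam • p) = M * A lam := rfl
  have hpdval : pd (qLN δ M μ σ j) j (lam • p) = -(M * B lam) := by
    have h1 := pd_qLN (μ := μ) δ j hσ M (lam • p) (by rw [hsmul]; exact hx)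
    rw [h1, hB]
    rw [show (∫ α in Set.Ioi (0:ℝ), -α * logitShare δ j (lam • p) α *
        (1 - logitShare δ j (lam • p) α) * lognormalPdf μ σ α)
      = ∫ α in Set.Ioi (0:ℝ), -(α * logitShare δ j (lam • p) α *
        (1 - logitShare δ j (lam • p) α) * lognormalPdf μ σ α) from by
      congr 1; funext α; ring]
    rw [integral_neg]
    ring
  have hLval : lnLaplace μ σ (lam * p j) = mik μ σ 0 (lam * p j) := lnLaplace_eq_mik _
  have hderiv : deriv (lnLaplace μ σ) (lam * p j) = -(mik μ σ 1 (lam * p j)) :=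
    deriv_lnLaplace hσ hx
  rw [hpdval, hqval, hLval, hderiv]
  rw [neg_neg]
  have hMne : M ≠ 0 := ne_of_gt hM
  have hAne : A lam ≠ 0 := ne_of_gt hApos'
  have hLne : mik μ σ 0 (lam * p j) ≠ 0 := ne_of_gt hLpos
  have hCne : mik μ σ 1 (lam * p j) ≠ 0 := ne_of_gt hCpos
  have hEne : Real.exp (δ j) ≠ 0 := ne_of_gt (Real.exp_pos _)
  field_simp
end

section
/- Fix J ≥ 1, δ ∈ ℝ^J and p ∈ ℝ^J with all p_j > 0, and let Ψ_j(z; p) = exp(δ_j − z p_j)/(1 + Σ_{ℓ=1}^J exp(δ_ℓ − z p_ℓ)). Then for each k there is a constant C > 0 (depending on δ) such that for all z > 0, |∂_{p_k} Ψ_j(z; p)| ≤ C z e^{−z p_j} and |∂²_{p_j p_k} Ψ_j(z; p)| ≤ C z² e^{−z p_j}. -/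
open MeasureTheory Real Filter

/-- Rescaled logit kernel `Ψ_j(z; p)`. -/
noncomputable def Psi {J : ℕ} (δ : Fin J → ℝ) (j : Fin J) (z : ℝ) (p : Fin J → ℝ) : ℝ :=
  Real.exp (δ j - z * p j) / (1 + ∑ l, Real.exp (δ l - z * p l))

/-- Mixed-logit demand for product `j` with `Gamma(r, β)` mixing over the price
coefficient, market size `M`. -/
noncomputable def qG {J : ℕ} (δ : Fin J → ℝ) (M r β : ℝ) (j : Fin J) (p : Fin J → ℝ) : ℝ :=
  M * ∫ α in Set.Ioi (0 : ℝ),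
    logitShare δ j p α * (β ^ r / Real.Gamma r * α ^ (r - 1) * Real.exp (-β * α))

/-- Limit demand term `H_j(p) = ∫₀^∞ z^{r−1} Ψ_j(z; p) dz`. -/
noncomputable def Hfun {J : ℕ} (δ : Fin J → ℝ) (r : ℝ) (j : Fin J) (p : Fin J → ℝ) : ℝ :=
  ∫ z in Set.Ioi (0 : ℝ), z ^ (r - 1) * Psi δ j z p

/-- Market-interaction correction `C_j(p)`. -/
noncomputable def Cfun {J : ℕ} (δ : Fin J → ℝ) (r : ℝ) (j : Fin J) (p : Fin J → ℝ) : ℝ :=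
  (1 / Real.Gamma r) * ∫ u in Set.Ioi (0 : ℝ),
    u ^ (r - 1) * Real.exp (-u) / (1 + ∑ l, Real.exp (δ l - p l / p j * u))

lemma expTerm_hasDerivAt {J : ℕ} (δ : Fin J → ℝ) (z : ℝ) (a b : Fin J) (p : Fin J → ℝ) :
    HasDerivAt (fun t => Real.exp (δ a - z * Function.update p b t a))
      (if a = b then -z * Real.exp (δ a - z * p b) else 0) (p b) := by
  by_cases h : a = b
  · subst h
    have h1 : HasDerivAt (fun t : ℝ => δ a - z * t) (-z) (p a) := by
      simpa using ((hasDerivAt_id (p a)).const_mul z).const_sub (δ a)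
    have h2 := h1.exp
    simp only [if_pos rfl, Function.update_self]
    simpa [mul_comm] using h2
  · simp only [Function.update_of_ne h, if_neg h]
    exact hasDerivAt_const _ _

lemma Psi_hasDerivAt {J : ℕ} (δ : Fin J → ℝ) (z : ℝ) (a b : Fin J) (p : Fin J → ℝ) :
    HasDerivAt (fun t => Psi δ a z (Function.update p b t))
      (z * Psi δ a z p * (Psi δ b z p - if a = b then 1 else 0)) (p b) := by
  have hf := expTerm_hasDerivAt δ z a b p
  have hgs : HasDerivAt (fun t => ∑ l, Real.exp (δ l - z * Function.update p b t l))
      (-z * Real.exp (δ b - z * p b)) (p b) := by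
    have := HasDerivAt.fun_sum (fun l (_ : l ∈ Finset.univ) => expTerm_hasDerivAt δ z l b p)
    simpa [Finset.sum_ite_eq'] using this
  have hg : HasDerivAt (fun t => 1 + ∑ l, Real.exp (δ l - z * Function.update p b t l))
      (-z * Real.exp (δ b - z * p b)) (p b) := hgs.const_add 1
  have hD : (0:ℝ) < 1 + ∑ l, Real.exp (δ l - z * p l) := by positivity
  have hg0 : (1 + ∑ l, Real.exp (δ l - z * Function.update p b (p b) l)) ≠ 0 := by
    simpa [Function.update_eq_self] using hD.ne'
  have hdiv := hf.fun_div hg hg0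
  simp only [Function.update_eq_self] at hdiv
  simp only [Psi]
  refine hdiv.congr_deriv ?_
  by_cases h : a = b
  · subst h
    simp only [if_pos rfl, if_true]
    field_simp
    ring
  · simp only [if_neg h]
    field_simp
    ring

lemma pd_Psi {J : ℕ} (δ : Fin J → ℝ) (z : ℝ) (a b : Fin J) (p : Fin J → ℝ) :
    pd (Psi δ a z) b p = z * Psi δ a z p * (Psi δ b z p - if a = b then 1 else 0) :=
  (Psi_hasDerivAt δ z a b p).deriv

lemma Psi_nonneg {J : ℕ} (δ : Fin J → ℝ) (a : Fin J) (z : ℝ) (p : Fin J → ℝ) :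
    0 ≤ Psi δ a z p := by
  unfold Psi; positivity

lemma Psi_le_one {J : ℕ} (δ : Fin J → ℝ) (a : Fin J) (z : ℝ) (p : Fin J → ℝ) :
    Psi δ a z p ≤ 1 := by
  rw [Psi, div_le_one (by positivity)]
  have h : Real.exp (δ a - z * p a) ≤ ∑ l, Real.exp (δ l - z * p l) :=
    Finset.single_le_sum (fun (l : Fin J) _ => Real.exp_nonneg (δ l - z * p l))
      (Finset.mem_univ a)
  linarith

lemma Psi_le_exp {J : ℕ} (δ : Fin J → ℝ) (a : Fin J) (z : ℝ) (p : Fin J → ℝ) :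
    Psi δ a z p ≤ Real.exp (δ a) * Real.exp (-z * p a) := by
  have h1 : Psi δ a z p ≤ Real.exp (δ a - z * p a) := by
    rw [Psi]
    exact div_le_self (Real.exp_nonneg _)
      (le_add_of_nonneg_right (Finset.sum_nonneg fun l _ => Real.exp_nonneg _))
  calc Psi δ a z p ≤ Real.exp (δ a - z * p a) := h1
    _ = Real.exp (δ a) * Real.exp (-z * p a) := by rw [← Real.exp_add]; ring_nf

/-- Derivative bounds for the rescaled logit kernel: there is `C > 0` (depending on `δ`)
with `|∂_{p_k} Ψ_j(z;p)| ≤ C z e^{−z p_j}` and `|∂²_{p_j p_k} Ψ_j(z;p)| ≤ C z² e^{−z p_j}`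
for all `z > 0`. -/
theorem Psi_deriv_bounds {J : ℕ} (hJ : 1 ≤ J) (δ : Fin J → ℝ)
    (p : Fin J → ℝ) (hp : ∀ i, 0 < p i) (j k : Fin J) :
    ∃ C > (0 : ℝ), ∀ z > (0 : ℝ),
      |pd (Psi δ j z) k p| ≤ C * z * Real.exp (-z * p j) ∧
      |pd (pd (Psi δ j z) k) j p| ≤ C * z ^ 2 * Real.exp (-z * p j) := by
  refine ⟨2 * Real.exp (δ j), by positivity, fun z hz => ?_⟩
  set A := Psi δ j z p with hA
  set B := Psi δ k z p with hB
  have hA0 : 0 ≤ A := Psi_nonneg δ j z p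
  have hA1 : A ≤ 1 := Psi_le_one δ j z p
  have hB0 : 0 ≤ B := Psi_nonneg δ k z p
  have hB1 : B ≤ 1 := Psi_le_one δ k z p
  have hAE : A ≤ Real.exp (δ j) * Real.exp (-z * p j) := Psi_le_exp δ j z p
  have hE : (0:ℝ) < Real.exp (-z * p j) := Real.exp_pos _
  have hE1 : (0:ℝ) < Real.exp (δ j) := Real.exp_pos _
  have hc1 : |B - (if j = k then 1 else 0)| ≤ 1 := by
    split <;> · rw [abs_le]; constructor <;> linarith
  have hc2 : |A - (if k = j then 1 else 0)| ≤ 1 := by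
    split <;> · rw [abs_le]; constructor <;> linarith
  have hA_1 : |A - 1| ≤ 1 := by rw [abs_le]; constructor <;> linarith
  constructor
  · rw [pd_Psi]
    have heq : |z * A * (B - if j = k then 1 else 0)|
        = z * A * |B - if j = k then 1 else 0| := by
      rw [abs_mul, abs_mul, abs_of_pos hz, abs_of_nonneg hA0]
    rw [heq]
    calc z * A * |B - if j = k then 1 else 0|
        ≤ z * (Real.exp (δ j) * Real.exp (-z * p j)) * 1 := by gcongr
      _ ≤ 2 * Real.exp (δ j) * z * Real.exp (-z * p j) := by nlinarith
  · have hval : pd (pd (Psi δ j z) k) j p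
        = (z * z * A) * ((A - 1) * (B - if j = k then 1 else 0))
          + (z * z * A) * (B * (A - if k = j then 1 else 0)) := by
      have hfun : (fun t => pd (Psi δ j z) k (Function.update p j t))
          = fun t => (z * Psi δ j z (Function.update p j t)) *
            (Psi δ k z (Function.update p j t) - if j = k then 1 else 0) := by
        funext t
        rw [pd_Psi]
      have h1 : HasDerivAt (fun t => z * Psi δ j z (Function.update p j t))
          (z * (z * Psi δ j z p * (Psi δ j z p - if (j : Fin J) = j then 1 else 0))) (p j) :=
        (Psi_hasDerivAt δ z j j p).const_mul z
      have h2 := (Psi_hasDerivAt δ z k j p).sub_const (if j = k then (1:ℝ) else 0)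
      have hmul := (h1.fun_mul h2).deriv
      have hstart : pd (pd (Psi δ j z) k) j p
          = deriv (fun t => pd (Psi δ j z) k (Function.update p j t)) (p j) := rfl
      rw [hstart, hfun, hmul]
      simp only [Function.update_eq_self, eq_self_iff_true, if_true, ← hA, ← hB]
      ring
    rw [hval]
    have hzzA : (0:ℝ) ≤ z * z * A := by positivity
    have hT1 : |(z * z * A) * ((A - 1) * (B - if j = k then 1 else 0))| ≤ z * z * A := by
      rw [abs_mul, abs_of_nonneg hzzA]
      have h : |(A - 1) * (B - if j = k then 1 else 0)| ≤ 1 := by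
        rw [abs_mul]
        exact mul_le_one₀ hA_1 (abs_nonneg _) hc1
      exact mul_le_of_le_one_right hzzA h
    have hT2 : |(z * z * A) * (B * (A - if k = j then 1 else 0))| ≤ z * z * A := by
      rw [abs_mul, abs_of_nonneg hzzA]
      have h : |B * (A - if k = j then 1 else 0)| ≤ 1 := by
        rw [abs_mul, abs_of_nonneg hB0]
        exact mul_le_one₀ hB1 (abs_nonneg _) hc2
      exact mul_le_of_le_one_right hzzA h
    calc |(z * z * A) * ((A - 1) * (B - if j = k then 1 else 0))
          + (z * z * A) * (B * (A - if k = j then 1 else 0))|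
        ≤ |(z * z * A) * ((A - 1) * (B - if j = k then 1 else 0))|
          + |(z * z * A) * (B * (A - if k = j then 1 else 0))| := abs_add_le _ _
      _ ≤ z * z * A + z * z * A := add_le_add hT1 hT2
      _ ≤ 2 * Real.exp (δ j) * z ^ 2 * Real.exp (-z * p j) := by
          nlinarith [mul_le_mul_of_nonneg_left hAE (by positivity : (0:ℝ) ≤ z * z)]
end
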